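/- arXiv:0904.1225 — 4 statements merged into one kernel-verified Lean document; each statement's English description precedes it below -/
import Mathlib

section
/- Let μ be a probability measure on ℝ that is mutually singular with Lebesgue measure. Then the pushforward measure ν = p_*μ of μ under the canonical quotient map p : ℝ → ℝ/ℤ is mutually singular with the Haar measure on the circle ℝ/ℤ. -/
open MeasureTheory

theorem Real.fact_zero_lt_one : Fact ((0 : ℝ) < 1) :=
  ⟨zero_lt_one⟩

attribute [local instance] Real.fact_zero_lt_one

/-- If a probability measure `μ` on `ℝ` is mutually singular with Lebesgue measure, then its
pushforward under the quotient map `ℝ → ℝ/ℤ` is mutually singular with Haar measure on the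
circle. -/
theorem pushforward_mutuallySingular_haar
    (μ : Measure ℝ) [IsProbabilityMeasure μ]
    (h : μ.MutuallySingular (volume : Measure ℝ)) :
    (μ.map ((↑) : ℝ → AddCircle (1 : ℝ))).MutuallySingular (volume : Measure (AddCircle (1 : ℝ))) := by
  obtain ⟨S, hSm, hμS, hvolS⟩ := h
  -- N : the Lebesgue-null set carrying volume's complement
  set N : Set ℝ := Sᶜ with hN
  -- M : the saturation of N under integer translations
  set M : Set ℝ := ⋃ n : ℤ, (fun x : ℝ => x + (n : ℝ)) ⁻¹' N with hM
  have hMm : MeasurableSet M := by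
    apply MeasurableSet.iUnion
    intro n
    exact hSm.compl.preimage (measurable_add_const _)
  have hvolM : volume M = 0 := by
    rw [hM]
    refine measure_iUnion_null fun n => ?_
    rw [measure_preimage_add_right]; exact hvolS
  have hNM : N ⊆ M := by
    intro x hx
    exact Set.mem_iUnion.2 ⟨0, by simpa using hx⟩
  -- the image set on the circle
  set p : ℝ → AddCircle (1 : ℝ) := ((↑) : ℝ → AddCircle (1 : ℝ)) with hp
  set T : Set (AddCircle (1 : ℝ)) := p '' M with hT
  have hpre : p ⁻¹' T = M := by
    ext x
    constructor
    · rintro ⟨y, hy, hxy⟩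
      have : (y : AddCircle (1 : ℝ)) = (x : AddCircle (1 : ℝ)) := hxy
      rw [QuotientAddGroup.eq] at this
      obtain ⟨k, hk⟩ := this
      simp only [zsmul_eq_mul, mul_one] at hk
      -- hk : (k : ℝ) = -y + x
      obtain ⟨n, hn⟩ := Set.mem_iUnion.1 hy
      refine Set.mem_iUnion.2 ⟨n - k, ?_⟩
      have hx' : x + ((n : ℝ) - (k : ℝ)) = y + (n : ℝ) := by linarith [hk]
      simp only [Set.mem_preimage, Int.cast_sub]
      rw [hx']
      exact hn
    · intro hx
      exact ⟨x, hx, rfl⟩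
  have hTm : MeasurableSet T := by
    rw [show MeasurableSet T ↔ MeasurableSet (p ⁻¹' T) from Iff.rfl, hpre]
    exact hMm
  refine ⟨Tᶜ, hTm.compl, ?_, ?_⟩
  · -- pushforward of Tᶜ is μ(Mᶜ) ≤ μ S = 0
    rw [Measure.map_apply (AddCircle.measurable_mk' (a := (1:ℝ))) hTm.compl]
    have : p ⁻¹' Tᶜ = Mᶜ := by rw [Set.preimage_compl, hpre]
    rw [this]
    have hsub : Mᶜ ⊆ S := by
      rw [← compl_compl S]
      exact Set.compl_subset_compl.2 hNM
    exact measure_mono_null hsub hμS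
  · -- Haar measure of T is 0
    rw [compl_compl]
    have := AddCircle.add_projection_respects_measure (T := (1:ℝ)) 0 hTm
    rw [this]
    refine measure_mono_null ?_ hvolM
    intro x hx
    exact (hpre ▸ hx.1)
end

section
/- Let μ be a probability measure on ℝ such that for every integer k ≥ 1 the k-fold convolution power μ^{∗k} is mutually singular with Lebesgue measure. Let ν = p_*μ be the pushforward of μ under the canonical quotient map p : ℝ → ℝ/ℤ. Then for every integer k ≥ 1, the k-fold convolution power ν^{∗k} is mutually singular with the Haar measure on ℝ/ℤ. -/
open MeasureTheory Set

attribute [local instance] Real.fact_zero_lt_one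

/-- The `k`-fold convolution power of a measure on an additive monoid, with the convention that
the zeroth power is the Dirac mass at `0`. -/
noncomputable def convPow {G : Type*} [AddMonoid G] [MeasurableSpace G]
    (μ : Measure G) : ℕ → Measure G
  | 0 => Measure.dirac 0
  | n + 1 => (convPow μ n).conv μ

lemma map_conv_hom {G H : Type*} [AddCommMonoid G] [MeasurableSpace G] [MeasurableAdd₂ G]
    [AddCommMonoid H] [MeasurableSpace H] [MeasurableAdd₂ H] (f : G →+ H) (hf : Measurable f)
    (σ τ : Measure G) [SFinite σ] [SFinite τ] :
    (σ.conv τ).map f = (σ.map f).conv (τ.map f) := by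
  unfold Measure.conv
  rw [Measure.map_map hf (by fun_prop), Measure.map_prod_map _ _ hf hf,
    Measure.map_map (by fun_prop) (by fun_prop)]
  congr 1
  ext x
  simp

lemma convPow_isProbabilityMeasure {G : Type*} [AddCommMonoid G] [MeasurableSpace G]
    [MeasurableAdd₂ G] (μ : Measure G) [IsProbabilityMeasure μ] (n : ℕ) :
    IsProbabilityMeasure (convPow μ n) := by
  induction n with
  | zero => exact inferInstanceAs (IsProbabilityMeasure (Measure.dirac (0 : G)))
  | succ n ih =>
    exact Measure.probabilitymeasure_of_probabilitymeasures_conv _ _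

lemma map_mutuallySingular (σ : Measure ℝ)
    (hσ : σ.MutuallySingular (volume : Measure ℝ)) :
    (σ.map ((↑) : ℝ → AddCircle (1 : ℝ))).MutuallySingular
      (volume : Measure (AddCircle (1 : ℝ))) := by
  obtain ⟨s, hsm, hσs, hvs⟩ := hσ
  set p : ℝ → AddCircle (1 : ℝ) := ((↑) : ℝ → AddCircle (1 : ℝ)) with hp
  have hpmeas : Measurable p := QuotientAddGroup.measurable_coe
  set A : Set ℝ := ⋂ n : ℤ, (fun x : ℝ => x + (n : ℝ)) ⁻¹' s with hA
  have hAm : MeasurableSet A := MeasurableSet.iInter fun n =>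
    (measurable_add_const _) hsm
  have hAs : A ⊆ s := fun x hx => by simpa using mem_iInter.1 hx 0
  have hAcompl : volume Aᶜ = 0 := by
    rw [hA, compl_iInter]
    refine le_antisymm (le_trans (measure_iUnion_le _) ?_) zero_le
    have : ∀ n : ℤ, volume ((fun x : ℝ => x + (n : ℝ)) ⁻¹' s)ᶜ = 0 := by
      intro n
      rw [← preimage_compl, measure_preimage_add_right volume _ _]
      exact hvs
    simp [this]
  have hpre : p ⁻¹' (p '' A) = A := by
    ext x
    constructor
    · rintro ⟨y, hy, hxy⟩
      have h2 : (y : AddCircle (1:ℝ)) = (x : AddCircle (1:ℝ)) := hxy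
      rw [QuotientAddGroup.eq, AddSubgroup.mem_zmultiples_iff] at h2
      obtain ⟨n, hn⟩ := h2
      rw [zsmul_eq_mul, mul_one] at hn
      have hx : x = y + (n : ℝ) := by linarith
      refine mem_iInter.2 fun m => ?_
      have := mem_iInter.1 hy (n + m)
      simp only [mem_preimage] at this ⊢
      rw [hx, add_assoc]
      simpa [add_assoc] using this
    · exact fun hx => ⟨x, hx, rfl⟩
  have htm : MeasurableSet (p '' A) := by
    rw [measurableSet_quotient]
    show MeasurableSet (p ⁻¹' (p '' A))
    rw [hpre]; exact hAm
  refine ⟨p '' A, htm, ?_, ?_⟩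
  · rw [Measure.map_apply hpmeas htm, hpre]
    exact measure_mono_null hAs hσs
  · have hmp := AddCircle.measurePreserving_mk (1 : ℝ) 0
    rw [← hmp.map_eq, Measure.map_apply hpmeas htm.compl]
    refine le_antisymm ?_ zero_le
    calc (volume.restrict (Ioc 0 (0 + 1))) (p ⁻¹' (p '' A)ᶜ)
        ≤ volume (p ⁻¹' (p '' A)ᶜ) := Measure.restrict_le_self _
      _ = 0 := by rw [preimage_compl, hpre]; exact hAcompl

/-- If every convolution power `μ^{∗k}` (`k ≥ 1`) of a probability measure `μ` on `ℝ` is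
mutually singular with Lebesgue measure, then every convolution power `ν^{∗k}` (`k ≥ 1`) of
the pushforward `ν = p₊μ` on the circle `ℝ/ℤ` is mutually singular with Haar measure. -/
theorem convPow_pushforward_mutuallySingular_haar
    (μ : Measure ℝ) [IsProbabilityMeasure μ]
    (h : ∀ k : ℕ, 1 ≤ k → (convPow μ k).MutuallySingular (volume : Measure ℝ))
    (k : ℕ) (hk : 1 ≤ k) :
    (convPow (μ.map ((↑) : ℝ → AddCircle (1 : ℝ))) k).MutuallySingular
      (volume : Measure (AddCircle (1 : ℝ))) := by
  have hpmeas : Measurable ((↑) : ℝ → AddCircle (1 : ℝ)) :=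
    QuotientAddGroup.measurable_coe
  have key : ∀ n : ℕ, convPow (μ.map ((↑) : ℝ → AddCircle (1 : ℝ))) n
      = (convPow μ n).map ((↑) : ℝ → AddCircle (1 : ℝ)) := by
    intro n
    induction n with
    | zero =>
      simp only [convPow, Measure.map_dirac' hpmeas]
      rfl
    | succ n ih =>
      haveI := convPow_isProbabilityMeasure μ n
      rw [show ((↑) : ℝ → AddCircle (1 : ℝ))
          = ⇑(QuotientAddGroup.mk' (AddSubgroup.zmultiples (1:ℝ))) from rfl] at ih ⊢
      show Measure.conv (convPow _ n) _ = Measure.map _ (Measure.conv (convPow μ n) μ)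
      rw [map_conv_hom (QuotientAddGroup.mk' (AddSubgroup.zmultiples (1:ℝ))) hpmeas, ih]
  rw [key k]
  exact map_mutuallySingular _ (h k hk)
end

section
/- Let ν be a probability measure on the circle ℝ/ℤ whose Fourier coefficients vanish at infinity, i.e. ∫ e^{2πint} dν(t) → 0 as |n| → ∞ (along the cofinite filter on ℤ). Then the unitary representation π^ν of ℤ on L²(ℝ/ℤ, ν) given by multiplication by the characters, (π^ν_n f)(t) = e^{2πint} f(t), is mixing: for all f, g ∈ L²(ℝ/ℤ, ν), the matrix coefficients ⟨π^ν_n f, g⟩ = ∫ e^{2πint} f(t) \overline{g(t)} dν(t) tend to 0 as |n| → ∞. -/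
open MeasureTheory

attribute [local instance] Real.fact_zero_lt_one

private lemma keyAux (ν : Measure (AddCircle (1 : ℝ))) [IsProbabilityMeasure ν]
    (h : Filter.Tendsto (fun n : ℤ => ∫ t, fourier n t ∂ν) Filter.cofinite (nhds 0))
    (ψ : AddCircle (1 : ℝ) → ℂ) (hψ : Integrable ψ ν) :
    Filter.Tendsto (fun n : ℤ => ∫ t, fourier n t * ψ t ∂ν) Filter.cofinite (nhds 0) := by
  -- integrability of products with characters
  have integ : ∀ (n : ℤ) (χ : AddCircle (1 : ℝ) → ℂ), Integrable χ ν →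
      Integrable (fun t => fourier n t * χ t) ν := by
    intro n χ hχ
    refine hχ.bdd_mul ((map_continuous (fourier n)).aestronglyMeasurable) (c := 1) (Filter.Eventually.of_forall fun t => ?_)
    simp [Circle.norm_coe]
  -- norm bound
  have bound : ∀ (n : ℤ) (χ : AddCircle (1 : ℝ) → ℂ),
      ‖∫ t, fourier n t * χ t ∂ν‖ ≤ ∫ t, ‖χ t‖ ∂ν := by
    intro n χ
    calc ‖∫ t, fourier n t * χ t ∂ν‖ ≤ ∫ t, ‖fourier n t * χ t‖ ∂ν :=
          norm_integral_le_integral_norm _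
    _ = ∫ t, ‖χ t‖ ∂ν := by simp [Circle.norm_coe]
  -- the statement for characters
  have char : ∀ m : ℤ, Filter.Tendsto (fun n : ℤ => ∫ t, fourier n t * fourier m t ∂ν)
      Filter.cofinite (nhds 0) := by
    intro m
    have hinj : Function.Injective (fun n : ℤ => n + m) := add_left_injective m
    have H := h.comp hinj.tendsto_cofinite
    have heq : ((fun n : ℤ => ∫ t, fourier n t ∂ν) ∘ fun n : ℤ => n + m)
        = fun n : ℤ => ∫ t, fourier n t * fourier m t ∂ν := by
      funext n
      simp only [Function.comp]
      exact integral_congr_ae (Filter.Eventually.of_forall fun t => fourier_add)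
    rwa [heq] at H
  -- the statement for trigonometric polynomials
  have span : ∀ P : C(AddCircle (1 : ℝ), ℂ),
      P ∈ Submodule.span ℂ (Set.range (@fourier (1 : ℝ))) →
      Filter.Tendsto (fun n : ℤ => ∫ t, fourier n t * P t ∂ν) Filter.cofinite (nhds 0) := by
    intro P hP
    induction hP using Submodule.span_induction with
    | mem x hx =>
        obtain ⟨m, rfl⟩ := hx
        exact char m
    | zero => simp only [ContinuousMap.zero_apply, mul_zero, integral_zero]; exact tendsto_const_nhds
    | add x y hx hy ihx ihy =>
        have hxi : Integrable (fun t => x t) ν :=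
          (BoundedContinuousFunction.mkOfCompact x).integrable ν
        have hyi : Integrable (fun t => y t) ν :=
          (BoundedContinuousFunction.mkOfCompact y).integrable ν
        have : (fun n : ℤ => ∫ t, fourier n t * (x + y) t ∂ν)
            = fun n : ℤ => (∫ t, fourier n t * x t ∂ν) + ∫ t, fourier n t * y t ∂ν := by
          funext n
          rw [← integral_add (integ n _ hxi) (integ n _ hyi)]
          refine integral_congr_ae (Filter.Eventually.of_forall fun t => ?_)
          simp [mul_add]
        rw [this]
        simpa using ihx.add ihy
    | smul c x hx ihx =>
        have : (fun n : ℤ => ∫ t, fourier n t * (c • x) t ∂ν)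
            = fun n : ℤ => c * ∫ t, fourier n t * x t ∂ν := by
          funext n
          rw [← integral_const_mul]
          refine integral_congr_ae (Filter.Eventually.of_forall fun t => ?_)
          simp; ring
        rw [this]
        simpa using ihx.const_mul c
  -- main ε-argument
  rw [NormedAddCommGroup.tendsto_nhds_zero]
  intro ε hε
  obtain ⟨G, hG_le, hG_int⟩ :=
    hψ.exists_boundedContinuous_integral_sub_le (by positivity : (0:ℝ) < ε/4)
  have hGc : G.toContinuousMap ∈
      closure ((Submodule.span ℂ (Set.range (@fourier (1 : ℝ)))) : Set C(AddCircle (1:ℝ), ℂ)) := by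
    rw [← Submodule.topologicalClosure_coe, span_fourier_closure_eq_top]
    trivial
  obtain ⟨P, hP_mem, hP_dist⟩ := Metric.mem_closure_iff.1 hGc (ε/4) (by positivity)
  have hP_int : Integrable (fun t => P t) ν :=
    (BoundedContinuousFunction.mkOfCompact P).integrable ν
  have hPe : ∀ᶠ n : ℤ in Filter.cofinite, ‖∫ t, fourier n t * P t ∂ν‖ < ε/4 :=
    (NormedAddCommGroup.tendsto_nhds_zero.1 (span P hP_mem)) (ε/4) (by positivity)
  filter_upwards [hPe] with n hn
  have hψG : Integrable (fun t => ψ t - G t) ν := hψ.sub hG_int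
  have hGP : Integrable (fun t => G t - P t) ν := hG_int.sub hP_int
  have e1 : (∫ t, fourier n t * (ψ t - G t) ∂ν)
      = (∫ t, fourier n t * ψ t ∂ν) - ∫ t, fourier n t * G t ∂ν := by
    rw [← integral_sub (integ n _ hψ) (integ n _ hG_int)]
    exact integral_congr_ae (Filter.Eventually.of_forall fun t => by ring)
  have e2 : (∫ t, fourier n t * (G t - P t) ∂ν)
      = (∫ t, fourier n t * G t ∂ν) - ∫ t, fourier n t * P t ∂ν := by
    rw [← integral_sub (integ n _ hG_int) (integ n _ hP_int)]
    exact integral_congr_ae (Filter.Eventually.of_forall fun t => by ring)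
  have hsplit : ∫ t, fourier n t * ψ t ∂ν
      = (∫ t, fourier n t * (ψ t - G t) ∂ν) + (∫ t, fourier n t * (G t - P t) ∂ν)
        + ∫ t, fourier n t * P t ∂ν := by
    rw [e1, e2]; ring
  have h1 : ‖∫ t, fourier n t * (ψ t - G t) ∂ν‖ ≤ ε/4 :=
    (bound n _).trans hG_le
  have h2 : ‖∫ t, fourier n t * (G t - P t) ∂ν‖ ≤ ε/4 := by
    refine (bound n _).trans ?_
    have : ∫ t, ‖G t - P t‖ ∂ν ≤ ∫ _t, ε/4 ∂ν := by
      refine integral_mono hGP.norm (integrable_const _) fun t => ?_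
      calc ‖G t - P t‖ = dist (G.toContinuousMap t) (P t) := by rw [dist_eq_norm]; rfl
      _ ≤ dist G.toContinuousMap P := ContinuousMap.dist_apply_le_dist t
      _ ≤ ε/4 := hP_dist.le
    simpa using this
  calc ‖∫ t, fourier n t * ψ t ∂ν‖
      ≤ ‖∫ t, fourier n t * (ψ t - G t) ∂ν‖ + ‖∫ t, fourier n t * (G t - P t) ∂ν‖
        + ‖∫ t, fourier n t * P t ∂ν‖ := by rw [hsplit]; exact norm_add₃_le
  _ < ε/4 + ε/4 + ε/4 := by
      have := hn
      linarith
  _ < ε := by linarith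

/-- If the Fourier coefficients of a probability measure `ν` on the circle `ℝ/ℤ` vanish at
infinity, then the unitary representation of `ℤ` on `L²(ℝ/ℤ, ν)` given by multiplication by the
characters is mixing: all matrix coefficients `⟨π^ν_n f, g⟩ = ∫ e^{2πint} f(t) conj (g t) dν(t)`
tend to `0` as `|n| → ∞`. -/
theorem multiplication_repr_mixing_of_fourierCoeff_tendsto_zero
    (ν : Measure (AddCircle (1 : ℝ))) [IsProbabilityMeasure ν]
    (h : Filter.Tendsto (fun n : ℤ => ∫ t, fourier n t ∂ν) Filter.cofinite (nhds 0))
    (f g : Lp ℂ 2 ν) :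
    Filter.Tendsto (fun n : ℤ => ∫ t, fourier n t * f t * (starRingEnd ℂ) (g t) ∂ν)
      Filter.cofinite (nhds 0) := by
  have hψ : Integrable (fun t => f t * (starRingEnd ℂ) (g t)) ν := by
    refine (L2.integrable_inner (𝕜 := ℂ) g f).congr ?_
    refine Filter.Eventually.of_forall fun t => ?_
    simp [RCLike.inner_apply, mul_comm]
  have := keyAux ν h _ hψ
  refine this.congr fun n => ?_
  refine integral_congr_ae (Filter.Eventually.of_forall fun t => ?_)
  ring
end

section
/- (Popa's transversality inequality, Hilbert-space form.) Let H be a complex Hilbert space, K ⊆ H a closed subspace, and P : H → K the orthogonal projection onto K. Let (u_t)_{t∈ℝ} be a family of unitary operators on H satisfying u_{s+t} = u_s u_t for all s, t ∈ ℝ, and let v be a unitary operator on H such that v u_t = u_{-t} v for all t ∈ ℝ and v ξ = ξ for every ξ ∈ K. Then for every ξ ∈ K and every t ∈ ℝ, ‖ξ − u_{2t} ξ‖ ≤ 2 ‖u_t ξ − P(u_t ξ)‖. -/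
/-- Popa's transversality inequality, Hilbert-space form: if `(u_t)` is a one-parameter family of
unitaries on a complex Hilbert space `H` with `u_{s+t} = u_s u_t`, and `v` is a unitary with
`v u_t = u_{-t} v` fixing a closed subspace `K` pointwise, then for every `ξ ∈ K` and `t ∈ ℝ`,
`‖ξ − u_{2t} ξ‖ ≤ 2 ‖u_t ξ − P_K(u_t ξ)‖`, where `P_K` is the orthogonal projection onto `K`. -/
theorem popa_transversality
    {H : Type*} [NormedAddCommGroup H] [InnerProductSpace ℂ H] [CompleteSpace H]
    (K : Submodule ℂ H) (hK : IsClosed (K : Set H)) [CompleteSpace K]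
    (u : ℝ → H ≃ₗᵢ[ℂ] H) (v : H ≃ₗᵢ[ℂ] H)
    (hu : ∀ s t : ℝ, ∀ x : H, u (s + t) x = u s (u t x))
    (hvu : ∀ t : ℝ, ∀ x : H, v (u t x) = u (-t) (v x))
    (hvK : ∀ ξ ∈ K, v ξ = ξ) :
    ∀ ξ ∈ K, ∀ t : ℝ,
      ‖ξ - u (2 * t) ξ‖ ≤ 2 * ‖u t ξ - (K.orthogonalProjectionOnto (u t ξ) : H)‖ := by
  intro ξ hξ t
  have h0 : ∀ x : H, u 0 x = x := by
    intro x
    have := hu 0 0 x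
    simp only [add_zero] at this
    exact ((u 0).injective this.symm)
  set η := u t ξ with hη
  set p : H := (K.orthogonalProjectionOnto η : H) with hp
  have hpK : p ∈ K := (K.orthogonalProjectionOnto η).2
  -- v η = u (-t) ξ
  have hvη : v η = u (-t) ξ := by
    rw [hη, hvu t ξ, hvK ξ hξ]
  -- ‖ξ - u (2t) ξ‖ = ‖u(-t) ξ - u t ξ‖
  have key : ‖ξ - u (2 * t) ξ‖ = ‖v η - η‖ := by
    have h1 : u (-t) (u (2 * t) ξ) = u t ξ := by
      rw [← hu]; congr 1; ring
    calc ‖ξ - u (2 * t) ξ‖ = ‖u (-t) (ξ - u (2 * t) ξ)‖ := ((u (-t)).norm_map _).symm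
      _ = ‖u (-t) ξ - u (-t) (u (2 * t) ξ)‖ := by rw [map_sub]
      _ = ‖v η - η‖ := by rw [h1, hvη, hη]
  rw [key]
  have hvp : v p = p := hvK p hpK
  have hsplit : v η - η = v (η - p) - (η - p) := by
    rw [map_sub, hvp]; abel
  rw [hsplit]
  calc ‖v (η - p) - (η - p)‖ ≤ ‖v (η - p)‖ + ‖η - p‖ := norm_sub_le _ _
    _ = 2 * ‖η - p‖ := by rw [(v).norm_map]; ring
end
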